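/- In the intermediate grading group G, set B_t = (½; ½, ½ − t) for integers t ≥ 1. (i) For all integers j ≥ 1, natural numbers k, integers l, and h in the four-element set {gr(ρ2), gr(ρ4), gr(ρ234), gr(ρ412)} = {(−½; ½, ½), (−3/2; −½, −½), (−3/2; −½, ½), (−3/2; ½, −½)}, the equation λ·B_j^{−1}·(−2k; 0, 0)·h·(½; 1, 0)^l = (0; 0, 0) holds if and only if j = 1, h = gr(ρ4) = (−3/2; −½, −½), k = 0, and l = 1. (ii) For all integers i ≥ 1, natural numbers k, integers l, and h in the four-element set {gr(ρ1), gr(ρ3), gr(ρ123), gr(ρ341)} = {(−½; ½, −½), (−½; −½, ½), (−½; ½, ½), (−3/2; −½, −½)}, the equation λ·(−2k; 0, 0)·h·B_i·(½; 1, 0)^l = (0; 0, 0) holds if and only if i = 1, h = gr(ρ123) = (−½; ½, ½), k = 0, and l = −1. (This classifies the permissible differential terms between the generators b_i and x of CFD⁻ of the (p,1)-cable: only ρ4 ⊗ x in δ¹(b_{p−1}) and ρ123 ⊗ b_{p−1} in δ¹(x) are grading-permissible.) -/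

import Mathlib

/-- The underlying carrier of the intermediate grading group `G`: triples `(m; a, b)`
of rational numbers (restricted to half-integers in the membership predicate `memG`),
with multiplication `(m; a, b)·(m′; a′, b′) = (m + m′ + ab′ − a′b; a + a′, b + b′)`. -/
@[ext]
structure IGG where
  m : ℚ
  a : ℚ
  b : ℚ

namespace IGG

instance : Mul IGG :=
  ⟨fun x y => ⟨x.m + y.m + x.a * y.b - y.a * x.b, x.a + y.a, x.b + y.b⟩⟩
instance : One IGG := ⟨⟨0, 0, 0⟩⟩
instance : Inv IGG := ⟨fun x => ⟨-x.m, -x.a, -x.b⟩⟩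

@[simp] theorem mul_m (x y : IGG) : (x * y).m = x.m + y.m + x.a * y.b - y.a * x.b := rfl
@[simp] theorem mul_a (x y : IGG) : (x * y).a = x.a + y.a := rfl
@[simp] theorem mul_b (x y : IGG) : (x * y).b = x.b + y.b := rfl
@[simp] theorem one_m : (1 : IGG).m = 0 := rfl
@[simp] theorem one_a : (1 : IGG).a = 0 := rfl
@[simp] theorem one_b : (1 : IGG).b = 0 := rfl
@[simp] theorem inv_m (x : IGG) : x⁻¹.m = -x.m := rfl
@[simp] theorem inv_a (x : IGG) : x⁻¹.a = -x.a := rfl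
@[simp] theorem inv_b (x : IGG) : x⁻¹.b = -x.b := rfl

instance : Group IGG :=
  Group.ofLeftAxioms
    (fun x y z => by ext <;> simp <;> ring)
    (fun x => by ext <;> simp)
    (fun x => by ext <;> simp)

end IGG

/-- Membership in the intermediate grading group `G`: triples `(m; a, b)` of
half-integers such that `a + b ∈ ℤ` and `m + ((2a+1)(a+b+1)+1)/2 ∈ ℤ`. -/
def memG (x : IGG) : Prop :=
  (∃ n : ℤ, x.m = n / 2) ∧ (∃ n : ℤ, x.a = n / 2) ∧ (∃ n : ℤ, x.b = n / 2) ∧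
  (∃ n : ℤ, x.a + x.b = (n : ℚ)) ∧
  (∃ n : ℤ, x.m + ((2 * x.a + 1) * (x.a + x.b + 1) + 1) / 2 = (n : ℚ))

/-- `λ = (1; 0, 0)`. -/
def lambdaG : IGG := ⟨1, 0, 0⟩
/-- `B_t = (½; ½, ½ − t)`, the `G`-grading of the generator `b_{p−t}` of `CFD⁻` of
the `(p,1)`-cable. -/
def Bgr (t : ℤ) : IGG := ⟨1/2, 1/2, 1/2 - (t : ℚ)⟩

lemma IGG.zpow_P (l : ℤ) : (⟨1/2, 1, 0⟩ : IGG) ^ l = ⟨(l : ℚ)/2, (l : ℚ), 0⟩ := by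
  induction l using Int.induction_on with
  | zero => ext <;> simp
  | succ n ih => rw [zpow_add_one, ih]; ext <;> simp <;> push_cast <;> ring
  | pred n ih => rw [zpow_sub_one, ih]; ext <;> simp <;> push_cast <;> ring

/-- Classifies the permissible differential terms between the generators `b_i` and
`x` of `CFD⁻` of the `(p,1)`-cable.
(i) For all integers `j ≥ 1`, natural numbers `k`, integers `l`, and `h` in the set
`{gr(ρ2), gr(ρ4), gr(ρ234), gr(ρ412)} = {(−½; ½, ½), (−3/2; −½, −½), (−3/2; −½, ½),
(−3/2; ½, −½)}`, the equation `λ·B_j⁻¹·(−2k; 0, 0)·h·(½; 1, 0)^l = (0; 0, 0)` holds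
if and only if `j = 1`, `h = gr(ρ4)`, `k = 0`, and `l = 1`.
(ii) For all integers `i ≥ 1`, natural numbers `k`, integers `l`, and `h` in the set
`{gr(ρ1), gr(ρ3), gr(ρ123), gr(ρ341)} = {(−½; ½, −½), (−½; −½, ½), (−½; ½, ½),
(−3/2; −½, −½)}`, the equation `λ·(−2k; 0, 0)·h·B_i·(½; 1, 0)^l = (0; 0, 0)` holds
if and only if `i = 1`, `h = gr(ρ123)`, `k = 0`, and `l = −1`. -/
theorem cable_grading_constraint_b_and_x :
    (∀ (j : ℤ), 1 ≤ j → ∀ (k : ℕ) (l : ℤ),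
      ∀ h ∈ ({⟨-(1/2), 1/2, 1/2⟩, ⟨-(3/2), -(1/2), -(1/2)⟩,
              ⟨-(3/2), -(1/2), 1/2⟩, ⟨-(3/2), 1/2, -(1/2)⟩} : Set IGG),
        (lambdaG * (Bgr j)⁻¹ * (⟨-2 * (k : ℚ), 0, 0⟩ : IGG) * h *
            (⟨1/2, 1, 0⟩ : IGG) ^ l = (⟨0, 0, 0⟩ : IGG) ↔
          (j = 1 ∧ h = (⟨-(3/2), -(1/2), -(1/2)⟩ : IGG) ∧ k = 0 ∧ l = 1))) ∧
    (∀ (i : ℤ), 1 ≤ i → ∀ (k : ℕ) (l : ℤ),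
      ∀ h ∈ ({⟨-(1/2), 1/2, -(1/2)⟩, ⟨-(1/2), -(1/2), 1/2⟩,
              ⟨-(1/2), 1/2, 1/2⟩, ⟨-(3/2), -(1/2), -(1/2)⟩} : Set IGG),
        (lambdaG * (⟨-2 * (k : ℚ), 0, 0⟩ : IGG) * h * Bgr i *
            (⟨1/2, 1, 0⟩ : IGG) ^ l = (⟨0, 0, 0⟩ : IGG) ↔
          (i = 1 ∧ h = (⟨-(1/2), 1/2, 1/2⟩ : IGG) ∧ k = 0 ∧ l = -1))) := by
  
  constructor
  · intro j hj k l h hh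
    have hjq : (1:ℚ) ≤ (j:ℚ) := by exact_mod_cast hj
    have hkq : (0:ℚ) ≤ (k:ℚ) := by positivity
    simp only [Set.mem_insert_iff, Set.mem_singleton_iff] at hh
    rcases hh with rfl | rfl | rfl | rfl <;>
        rw [IGG.zpow_P] <;>
        simp only [lambdaG, Bgr, IGG.ext_iff, IGG.mul_m, IGG.mul_a, IGG.mul_b,
          IGG.inv_m, IGG.inv_a, IGG.inv_b, IGG.mk.injEq] <;>
        norm_num
    -- gr(ρ2): the b-component forces j = 0, contradicting j ≥ 1
    · intro e1 e2 e3
      omega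
    -- gr(ρ4): the good case
    · constructor
      · rintro ⟨e1, e2, e3⟩
        have hj1 : (j:ℚ) = 1 := by linarith
        have hl1 : (l:ℚ) = 1 := by linarith
        rw [hj1, hl1] at e1
        refine ⟨by exact_mod_cast hj1, by exact_mod_cast (by linarith : (k:ℚ) = 0),
          by exact_mod_cast hl1⟩
      · rintro ⟨rfl, rfl, rfl⟩
        norm_num
    -- gr(ρ234): the b-component forces j = 0, contradicting j ≥ 1
    · intro e1 e2 e3
      omega
    -- gr(ρ412): forces j = 1, l = 0, then the m-component gives k = -1/2
    · intro e1 e2 e3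
      subst e2
      have hj1 : (j:ℚ) = 1 := by linarith
      rw [hj1] at e1
      push_cast at e1
      linarith
  · intro i hi k l h hh
    have hiq : (1:ℚ) ≤ (i:ℚ) := by exact_mod_cast hi
    have hkq : (0:ℚ) ≤ (k:ℚ) := by positivity
    simp only [Set.mem_insert_iff, Set.mem_singleton_iff] at hh
    rcases hh with rfl | rfl | rfl | rfl <;>
        rw [IGG.zpow_P] <;>
        simp only [lambdaG, Bgr, IGG.ext_iff, IGG.mul_m, IGG.mul_a, IGG.mul_b,
          IGG.inv_m, IGG.inv_a, IGG.inv_b, IGG.mk.injEq] <;>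
        norm_num
    -- gr(ρ1): the b-component forces i = 0, contradicting i ≥ 1
    · intro e1 e2 e3
      linarith
    -- gr(ρ3): forces i = 1, l = 0, then the m-component gives 2k = 1
    · intro e1 e2 e3
      subst e2
      have hi1 : (i:ℚ) = 1 := by linarith
      rw [hi1] at e1
      push_cast at e1
      have h2k : (2 * (k:ℕ) : ℚ) = 1 := by push_cast; linarith
      have : (2 * k : ℕ) = 1 := by exact_mod_cast h2k
      omega
    -- gr(ρ123): the good case
    · constructor
      · rintro ⟨e1, e2, e3⟩
        have hi1 : (i:ℚ) = 1 := by linarith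
        have hl1 : (l:ℚ) = -1 := by linarith
        rw [hi1, hl1] at e1
        refine ⟨by exact_mod_cast hi1, by exact_mod_cast (by linarith : (k:ℚ) = 0),
          by exact_mod_cast hl1⟩
      · rintro ⟨rfl, rfl, rfl⟩
        norm_num
    -- gr(ρ341): the b-component forces i = 0, contradicting i ≥ 1
    · intro e1 e2 e3
      linarith
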